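/- arXiv:2004.04183 — 3 statements merged into one kernel-verified Lean document; each statement's English description precedes it below -/
import Mathlib

section
/- The functor Set^↓ → Fun(Setᵒᵖ, Set) sending a bundle π : E → B to the Dirichlet functor X ↦ Σ_{b ∈ B} (X → π⁻¹(b)) is fully faithful. -/
open CategoryTheory CategoryTheory.Limits Opposite

universe u

/-- The fiber `π⁻¹(b)` of a bundle `π : E → B` over `b ∈ B`. -/
abbrev fiber (π : Arrow (Type u)) (b : π.right) : Type u := { e : π.left // π.hom e = b }

/-- The Dirichlet extent functor `Set^↓ → Fun(Setᵒᵖ, Set)`, sending a bundle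
`π : E → B` to the Dirichlet functor `X ↦ Σ (b : B), (X → π⁻¹ b)` and a
bundle map `(f, g)` to the natural transformation `(b, h) ↦ (f b, g ∘ h)`. -/
def DirExt : Arrow (Type u) ⥤ ((Type u)ᵒᵖ ⥤ Type u) where
  obj π :=
    { obj := fun X => Σ b : π.right, X.unop → fiber π b
      map := fun g => TypeCat.ofHom fun s => ⟨s.1, fun y => s.2 (g.unop y)⟩ }
  map {π π'} φ :=
    { app := fun X => TypeCat.ofHom fun s =>
        ⟨φ.right s.1, fun x =>
          ⟨φ.left (s.2 x).1, by
            have h := ConcreteCategory.congr_hom φ.w (s.2 x).1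
            simp only [Functor.id_map, types_comp_apply] at h
            rw [h]; exact congrArg φ.right (s.2 x).2⟩⟩ }

/-- The canonical element of `DirExt.obj π` at the fiber over `b`. -/
def tautSec (π : Arrow (Type u)) (b : π.right) :
    (DirExt.obj π).obj (op (fiber π b)) := (⟨b, id⟩ : Σ b' : π.right, fiber π b → fiber π b')

lemma eta_eval {π π' : Arrow (Type u)} (η : DirExt.obj π ⟶ DirExt.obj π')
    (X : (Type u)ᵒᵖ) (b : π.right) (h : X.unop → fiber π b) :
    η.app X (⟨b, h⟩ : Σ b : π.right, X.unop → fiber π b) =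
      (⟨(η.app (op (fiber π b)) (tautSec π b) : Σ b' : π'.right, fiber π b → fiber π' b').1,
        fun x => (η.app (op (fiber π b)) (tautSec π b) : Σ b' : π'.right, fiber π b → fiber π' b').2 (h x)⟩ :
        Σ b : π'.right, X.unop → fiber π' b) := by
  have hop : op (fiber π b) ⟶ X := Quiver.Hom.op (TypeCat.ofHom h)
  have := ConcreteCategory.congr_hom (η.naturality (X := op (fiber π b)) (Y := X)
    (Quiver.Hom.op (TypeCat.ofHom h))) (tautSec π b)
  exact this

/-- The functor `Set^↓ → Fun(Setᵒᵖ, Set)` sending a bundle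
`π : E → B` to the Dirichlet functor `X ↦ Σ (b : B), (X → π⁻¹ b)` is fully
faithful. -/
theorem DirExt_fullyFaithful : (DirExt.{u}).Full ∧ (DirExt.{u}).Faithful := by
  constructor
  · refine ⟨fun {π π'} η => ?_⟩
    set F : π.right → π'.right :=
      fun b => (η.app (op (fiber π b)) (tautSec π b) : Σ b' : π'.right, fiber π b → fiber π' b').1 with hF
    have Fmem : ∀ b (x : fiber π b),
        π'.hom ((η.app (op (fiber π b)) (tautSec π b) : Σ b' : π'.right, fiber π b → fiber π' b').2 x).1 = F b :=
      fun b x => ((η.app (op (fiber π b)) (tautSec π b) : Σ b' : π'.right, fiber π b → fiber π' b').2 x).2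
    set G : π.left → π'.left :=
      fun e => ((η.app (op (fiber π (π.hom e))) (tautSec π (π.hom e)) : Σ b' : π'.right, fiber π (π.hom e) → fiber π' b').2 ⟨e, rfl⟩).1 with hG
    have w : TypeCat.ofHom G ≫ π'.hom = π.hom ≫ TypeCat.ofHom F := by
      ext e
      exact Fmem (π.hom e) ⟨e, rfl⟩
    refine ⟨Arrow.homMk (u := TypeCat.ofHom G) (v := TypeCat.ofHom F) w, ?_⟩
    ext X s
    obtain ⟨b, h⟩ := s
    refine Eq.trans ?_ (eta_eval η X b h).symm
    refine Sigma.ext rfl (heq_of_eq ?_)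
    funext x
    apply Subtype.ext
    show G (h x).1 = ((η.app (op (fiber π b)) (tautSec π b)).2 (h x)).1
    generalize h x = y
    obtain ⟨e, pe⟩ := y
    subst pe
    rfl
  · refine ⟨fun {π π'} φ ψ hfg => ?_⟩
    have key : ∀ b : π.right,
        (DirExt.map φ).app (op (fiber π b)) (tautSec π b) =
        (DirExt.map ψ).app (op (fiber π b)) (tautSec π b) := by
      intro b; rw [hfg]
    have hr : φ.right = ψ.right := by
      ext b
      exact congrArg Sigma.fst (key b)
    have hl : φ.left = ψ.left := by
      ext e
      exact congrArg
        (fun s : (DirExt.obj π').obj (op (fiber π (π.hom e))) => (s.2 ⟨e, rfl⟩).1)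
        (key (π.hom e))
    ext <;> simp [hl, hr]
end

section
/- A natural transformation φ : D → D' between Dirichlet functors is cartesian (all naturality squares are pullbacks) if and only if the single square formed by applying φ and D, D' to the arrow !_0 : ∅ → 1 — namely the square with vertical maps D(!_0) : D(1) → D(0), D'(!_0) : D'(1) → D'(0) and horizontal maps φ_1, φ_0 — is a pullback in Set. -/
open CategoryTheory CategoryTheory.Limits Opposite

universe u

/-- The unique map `!_0 : ∅ → 1`. -/
def bangZero : PEmpty.{u + 1} ⟶ PUnit.{u + 1} := TypeCat.ofHom (fun e => e.elim)

namespace Statement15Aux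

/-- The map `1 → X` picking out `x`. -/
def ptMap {X : Type u} (x : X) : PUnit.{u + 1} ⟶ X := TypeCat.ofHom fun _ => x

/-- The unique map `∅ → X`. -/
def emptyMap (X : Type u) : PEmpty.{u + 1} ⟶ X := TypeCat.ofHom fun e => e.elim

theorem bang_comp_ptMap {X : Type u} (x : X) :
    bangZero ≫ ptMap x = emptyMap X := by
  ext e; exact e.elim

theorem emptyMap_comp {X X' : Type u} (g : X ⟶ X') :
    emptyMap X ≫ g = emptyMap X' := by
  ext e; exact e.elim

theorem ptMap_comp {X X' : Type u} (x : X) (g : X ⟶ X') :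
    ptMap x ≫ g = ptMap (g x) := ConcreteCategory.hom_ext _ _ fun _ => rfl

/-- Elementwise characterization of pullback squares in `Type u`. -/
theorem isPullback_iff_types {P X Y Z : Type u} (fst : P ⟶ X) (snd : P ⟶ Y)
    (f : X ⟶ Z) (g : Y ⟶ Z) :
    IsPullback fst snd f g ↔
      (∀ p, f (fst p) = g (snd p)) ∧
        ∀ x y, f x = g y → ∃! p, fst p = x ∧ snd p = y := by
  constructor
  · intro h
    have w : ∀ p, f (fst p) = g (snd p) := fun p => types_congr_hom h.w p
    refine ⟨w, fun x y hxy => ?_⟩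
    have hb := (PullbackCone.isLimitEquivBijective h.cone) h.isLimit
    obtain ⟨p, hp⟩ := hb.2 ⟨⟨x, y⟩, hxy⟩
    refine ⟨p, ⟨congr_arg (fun q => q.1.1) hp, congr_arg (fun q => q.1.2) hp⟩,
      fun q hq => hb.1 ?_⟩
    rw [hp]
    exact Subtype.ext (Prod.ext hq.1 hq.2)
  · rintro ⟨w, h⟩
    have w' : fst ≫ f = snd ≫ g := ConcreteCategory.hom_ext _ _ w
    refine IsPullback.of_isLimit (c := PullbackCone.mk fst snd w') ?_
    refine (PullbackCone.isLimitEquivBijective (PullbackCone.mk fst snd w')).symm ?_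
    rw [Function.bijective_iff_existsUnique]
    rintro ⟨⟨x, y⟩, hxy⟩
    obtain ⟨p, hp, hu⟩ := h x y hxy
    refine ⟨p, Subtype.ext (Prod.ext hp.1 hp.2), fun q hq => hu q ?_⟩
    exact ⟨congr_arg (fun r => r.1.1) hq, congr_arg (fun r => r.1.2) hq⟩

variable (X : Type u)

/-- The wide cospan in `(Type u)ᵒᵖ` consisting of `X` copies of `!_0 : 0 ⟶ 1`
(i.e. `1 ⟶ 0` in the opposite category). -/
def wideDiagram : WidePullbackShape X ⥤ (Type u)ᵒᵖ :=
  WidePullbackShape.wideCospan (op PEmpty.{u + 1}) (fun _ => op PUnit.{u + 1})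
    (fun _ => bangZero.op)

/-- The cone over `wideDiagram X` with apex `op X`, exhibiting `X` as the wide
pullback (in `Setᵒᵖ`) of `X` copies of `1` over `0`. -/
def wideCone : Cone (wideDiagram X) :=
  WidePullbackShape.mkCone ((emptyMap X).op) (fun x => (ptMap x).op)
    (fun x => by
      dsimp [wideDiagram]
      show (ptMap x).op ≫ bangZero.op = (emptyMap X).op
      rw [← op_comp, bang_comp_ptMap])

/-- The cone `wideCone X` is a limit cone. -/
def wideConeIsLimit : IsLimit (wideCone X) where
  lift s := Quiver.Hom.op (X := X) (Y := unop s.pt)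
    (TypeCat.ofHom fun x => (s.π.app (some x)).unop PUnit.unit)
  fac s j := by
    apply Quiver.Hom.unop_inj
    ext t
    cases j with
    | none => exact t.elim
    | some x => cases t; rfl
  uniq s m hm := by
    apply Quiver.Hom.unop_inj
    ext x
    have := congr_arg Quiver.Hom.unop (hm (some x))
    exact (types_congr_hom this PUnit.unit)

/-- Elementwise consequence of preservation of the wide pullback: an element of
`D(X)` is uniquely determined by a compatible family of elements of `D(1)`
over a common element of `D(0)`. -/
theorem existsUnique_of_family (D : (Type u)ᵒᵖ ⥤ Type u)
    (hD : ∀ (J : Type u) [SmallCategory J] [IsConnected J],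
      Nonempty (PreservesLimitsOfShape J D))
    (b : D.obj (op PEmpty.{u + 1})) (e : X → D.obj (op PUnit.{u + 1}))
    (he : ∀ x, D.map bangZero.op (e x) = b) :
    ∃! d : D.obj (op X),
      (∀ x, D.map (ptMap x).op d = e x) ∧ D.map (emptyMap X).op d = b := by
  obtain ⟨hP⟩ := hD (WidePullbackShape X)
  have hlim : IsLimit (D.mapCone (wideCone X)) :=
    isLimitOfPreserves D (wideConeIsLimit X)
  set F := wideDiagram X ⋙ D with hF
  have hs : (fun j => Option.casesOn j b e : ∀ j, F.obj j) ∈ F.sections := by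
    intro j j' f
    change WidePullbackShape.Hom j j' at f
    cases f with
    | id => simp [WidePullbackShape.hom_id]
    | term j => exact he _
  obtain ⟨d, hd, hdu⟩ := (Types.isLimit_iff (F := F) (D.mapCone (wideCone X))).mp
    ⟨hlim⟩ _ hs
  refine ⟨d, ⟨fun x => hd (some x), hd none⟩, fun d' hd' => hdu d' ?_⟩
  rintro (_ | x)
  · exact hd'.2
  · exact hd'.1 x

end Statement15Aux

open Statement15Aux

/-- A natural transformation `φ : D ⟶ D'` between Dirichlet
functors is cartesian (all naturality squares are pullbacks) if and only if
the single naturality square at the arrow `!_0 : ∅ → 1` — with vertical maps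
`D(!_0) : D(1) → D(0)` and `D'(!_0) : D'(1) → D'(0)` and horizontal maps
`φ_1`, `φ_0` — is a pullback in `Set`. -/
theorem cartesian_iff_pullback_at_bangZero
    (D D' : (Type u)ᵒᵖ ⥤ Type u)
    (hD : ∀ (J : Type u) [SmallCategory J] [IsConnected J],
      Nonempty (PreservesLimitsOfShape J D))
    (hD' : ∀ (J : Type u) [SmallCategory J] [IsConnected J],
      Nonempty (PreservesLimitsOfShape J D'))
    (φ : D ⟶ D') :
    (∀ (X X' : Type u) (g : X ⟶ X'),
        IsPullback (φ.app (op X')) (D.map g.op) (D'.map g.op) (φ.app (op X))) ↔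
      IsPullback (φ.app (op PUnit.{u + 1})) (D.map bangZero.{u}.op)
        (D'.map bangZero.{u}.op) (φ.app (op PEmpty.{u + 1})) := by
  -- Naturality, elementwise, for arbitrary maps.
  have nat : ∀ {A B : Type u} (f : A ⟶ B) (d : D.obj (op B)),
      D'.map f.op (φ.app (op B) d) = φ.app (op A) (D.map f.op d) := by
    intro A B f d
    exact (types_congr_hom (φ.naturality f.op) d).symm
  constructor
  · intro h
    exact h PEmpty PUnit bangZero
  · intro hb
    intro X X' g
    rw [isPullback_iff_types] at hb ⊢
    obtain ⟨-, hb⟩ := hb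
    refine ⟨fun d => nat g d, ?_⟩
    intro d' d0 hcomm
    -- `d' : D'(X')`, `d0 : D(X)` with `D'(g)(d') = φ_X(d0)`.
    set b0 : D.obj (op PEmpty) := D.map (emptyMap X).op d0 with hb0
    -- components of `d'` over `b0`
    have hkey : ∀ x' : X',
        D'.map bangZero.op (D'.map (ptMap x').op d') = φ.app (op PEmpty) b0 := by
      intro x'
      have h1 : D'.map bangZero.op (D'.map (ptMap x').op d')
          = D'.map (emptyMap X').op d' := by
        rw [← FunctorToTypes.map_comp_apply, ← op_comp, bang_comp_ptMap]
      have h2 : φ.app (op PEmpty) b0 = D'.map (emptyMap X').op d' := by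
        rw [hb0, ← nat (emptyMap X) d0, ← hcomm, ← FunctorToTypes.map_comp_apply,
          ← op_comp, emptyMap_comp]
      rw [h1, h2]
    -- lift each component through the pullback at `!_0`
    choose e he1 he2 using fun x' : X' =>
      (hb (D'.map (ptMap x').op d') b0 (hkey x')).exists
    have huniq : ∀ (x' : X') (p : D.obj (op PUnit)),
        φ.app (op PUnit) p = D'.map (ptMap x').op d' → D.map bangZero.op p = b0 →
          p = e x' := by
      intro x' p h1 h2
      obtain ⟨q, -, hq⟩ := hb (D'.map (ptMap x').op d') b0 (hkey x')
      rw [hq p ⟨h1, h2⟩, hq (e x') ⟨he1 x', he2 x'⟩]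
    -- glue the components to an element of `D(X')`
    obtain ⟨d, ⟨hd1, hd2⟩, hdu⟩ := existsUnique_of_family X' D hD b0 e he2
    refine ⟨d, ⟨?_, ?_⟩, ?_⟩
    · -- φ(d) = d'
      obtain ⟨w, ⟨-, -⟩, hw⟩ := existsUnique_of_family X' D' hD'
        (D'.map (emptyMap X').op d') (fun x' => D'.map (ptMap x').op d')
        (fun x' => by rw [← FunctorToTypes.map_comp_apply, ← op_comp, bang_comp_ptMap])
      have h1 : φ.app (op X') d = w := by
        refine hw _ ⟨fun x' => ?_, ?_⟩
        · rw [nat (ptMap x') d, hd1 x', he1 x']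
        · rw [nat (emptyMap X') d, hd2, hb0, ← nat (emptyMap X) d0, ← hcomm,
            ← FunctorToTypes.map_comp_apply, ← op_comp, emptyMap_comp]
      have h2 : d' = w := hw _ ⟨fun _ => rfl, rfl⟩
      rw [h1, h2]
    · -- D(g)(d) = d0
      obtain ⟨w, ⟨-, -⟩, hw⟩ := existsUnique_of_family X D hD b0
        (fun x => e (g x)) (fun x => he2 (g x))
      have h1 : D.map g.op d = w := by
        refine hw _ ⟨fun x => ?_, ?_⟩
        · rw [← FunctorToTypes.map_comp_apply, ← op_comp, ptMap_comp]
          exact hd1 (g x)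
        · rw [← FunctorToTypes.map_comp_apply, ← op_comp, emptyMap_comp]
          exact hd2
      have h2 : d0 = w := by
        refine hw _ ⟨fun x => ?_, rfl⟩
        refine huniq (g x) _ ?_ ?_
        · rw [← nat (ptMap x) d0, ← hcomm, ← FunctorToTypes.map_comp_apply,
            ← op_comp, ptMap_comp]
        · rw [← FunctorToTypes.map_comp_apply, ← op_comp, bang_comp_ptMap]
      rw [h1, h2]
    · -- uniqueness
      rintro d1 ⟨hφ, hg⟩
      refine hdu d1 ⟨fun x' => ?_, ?_⟩
      · refine huniq x' _ ?_ ?_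
        · rw [← nat (ptMap x') d1, hφ]
        · rw [← FunctorToTypes.map_comp_apply, ← op_comp, bang_comp_ptMap, hb0,
            ← hg, ← FunctorToTypes.map_comp_apply, ← op_comp, emptyMap_comp]
      · rw [hb0, ← hg, ← FunctorToTypes.map_comp_apply, ← op_comp, emptyMap_comp]
end

section
/- The category of polynomial functors Set → Set with cartesian natural transformations is equivalent to the category of Dirichlet functors Setᵒᵖ → Set with cartesian natural transformations; under this equivalence the representable polynomial X ↦ X^N corresponds to the representable Dirichlet functor X ↦ N^X. -/
open CategoryTheory CategoryTheory.Limits Opposite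

universe u

/-- The polynomial functor `X ↦ Σ (b : B), (π⁻¹ b → X)` of a bundle `π : E → B`. -/
def polyExt (π : Arrow (Type u)) : Type u ⥤ Type u where
  obj X := Σ b : π.right, fiber π b → X
  map g := TypeCat.ofHom fun s => ⟨s.1, fun e => g (s.2 e)⟩

/-- Objects of the category of polynomial functors. -/
structure PolyCart : Type (u + 1) where
  F : Type u ⥤ Type u
  ispoly : ∃ π : Arrow (Type u), Nonempty (F ≅ polyExt π)

/-- Cartesian natural transformations between polynomial functors. -/
@[ext]
structure PolyCartHom (P Q : PolyCart.{u}) : Type (u + 1) where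
  t : P.F ⟶ Q.F
  cart : ∀ {X Y : Type u} (g : X ⟶ Y),
    IsPullback (t.app X) (P.F.map g) (Q.F.map g) (t.app Y)

/-- The category of polynomial functors and cartesian natural transformations. -/
instance : Category PolyCart.{u} where
  Hom := PolyCartHom
  id P := ⟨𝟙 P.F, fun g => IsPullback.of_horiz_isIso ⟨by simp⟩⟩
  comp f g := ⟨f.t ≫ g.t, fun h => IsPullback.paste_horiz (f.cart h) (g.cart h)⟩
  id_comp f := PolyCartHom.ext (by simp)
  comp_id f := PolyCartHom.ext (by simp)
  assoc f g h := PolyCartHom.ext (by simp)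

/-- A Dirichlet functor: a functor `Setᵒᵖ → Set` preserving connected limits. -/
def IsDirichlet (D : (Type u)ᵒᵖ ⥤ Type u) : Prop :=
  ∀ (J : Type u) [SmallCategory J] [IsConnected J],
    Nonempty (PreservesLimitsOfShape J D)

/-- Objects of the category of Dirichlet functors. -/
structure DirCart : Type (u + 1) where
  F : (Type u)ᵒᵖ ⥤ Type u
  isdir : IsDirichlet F

/-- Cartesian natural transformations between Dirichlet functors. -/
@[ext]
structure DirCartHom (P Q : DirCart.{u}) : Type (u + 1) where
  t : P.F ⟶ Q.F
  cart : ∀ {X Y : (Type u)ᵒᵖ} (g : X ⟶ Y),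
    IsPullback (t.app X) (P.F.map g) (Q.F.map g) (t.app Y)

/-- The category of Dirichlet functors and cartesian natural transformations. -/
instance : Category DirCart.{u} where
  Hom := DirCartHom
  id P := ⟨𝟙 P.F, fun g => IsPullback.of_horiz_isIso ⟨by simp⟩⟩
  comp f g := ⟨f.t ≫ g.t, fun h => IsPullback.paste_horiz (f.cart h) (g.cart h)⟩
  id_comp f := DirCartHom.ext (by simp)
  comp_id f := DirCartHom.ext (by simp)
  assoc f g h := DirCartHom.ext (by simp)

section Helpers

variable {P X Y Z : Type u} {fst : P ⟶ X} {snd : P ⟶ Y} {f : X ⟶ Z} {g : Y ⟶ Z}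

theorem exun_of_isPullback (h : IsPullback fst snd f g) (x : X) (y : Y) (hxy : f x = g y) :
    ∃! p : P, fst p = x ∧ snd p = y := by
  refine ⟨h.lift (TypeCat.ofHom fun _ : PUnit.{u + 1} => x) (TypeCat.ofHom fun _ => y)
      (ConcreteCategory.hom_ext _ _ fun _ => hxy) PUnit.unit,
    ⟨ConcreteCategory.congr_hom (h.lift_fst _ _ _) _, ConcreteCategory.congr_hom (h.lift_snd _ _ _) _⟩, ?_⟩
  intro p hp
  have : (TypeCat.ofHom fun _ : PUnit.{u + 1} => p) =
      h.lift (TypeCat.ofHom fun _ : PUnit.{u + 1} => x) (TypeCat.ofHom fun _ => y)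
        (ConcreteCategory.hom_ext _ _ fun _ => hxy) := by
    apply h.hom_ext
    · rw [h.lift_fst]; ext _; exact hp.1
    · rw [h.lift_snd]; ext _; exact hp.2
  exact ConcreteCategory.congr_hom this PUnit.unit

theorem isPullback_of_exun (comm : ∀ p, f (fst p) = g (snd p))
    (h : ∀ (x : X) (y : Y), f x = g y → ∃! p : P, fst p = x ∧ snd p = y) :
    IsPullback fst snd f g := by
  refine IsPullback.of_isLimit ((PullbackCone.isLimitEquivBijective
      (PullbackCone.mk fst snd (ConcreteCategory.hom_ext _ _ comm))).symm ?_)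
  constructor
  · intro p q hpq
    have h1 : fst p = fst q := congrArg (fun z => z.1.1) hpq
    have h2 : snd p = snd q := congrArg (fun z => z.1.2) hpq
    obtain ⟨r, _, hr⟩ := h (fst q) (snd q) (comm q)
    rw [hr p ⟨h1, h2⟩, hr q ⟨rfl, rfl⟩]
  · rintro ⟨⟨x, y⟩, hxy⟩
    obtain ⟨p, ⟨hp1, hp2⟩, -⟩ := h x y hxy
    exact ⟨p, Subtype.ext (Prod.ext hp1 hp2)⟩

end Helpers

/-- Equality of elements of a Dirichlet-style sigma type, componentwise. -/
theorem sigmaFibEq {π : Arrow (Type u)} {X : Type u}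
    {σ τ : Σ b : π.right, X → fiber π b} (h1 : σ.1 = τ.1)
    (h2 : ∀ x, ((σ.2 x : fiber π σ.1) : π.left) = ((τ.2 x : fiber π τ.1) : π.left)) : σ = τ := by
  obtain ⟨a, uv⟩ := σ
  obtain ⟨b, v⟩ := τ
  dsimp at h1
  subst h1
  exact congrArg (Sigma.mk a) (funext fun x => Subtype.ext (h2 x))

theorem sigmaFibVal {π : Arrow (Type u)} {X : Type u}
    {σ τ : Σ b : π.right, X → fiber π b} (h : σ = τ) (x : X) :
    ((σ.2 x : fiber π σ.1) : π.left) = ((τ.2 x : fiber π τ.1) : π.left) := by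
  subst h; rfl

/-- Morphisms of bundles: fiberwise-bijective (cartesian) squares. -/
structure BundHom (π π' : Arrow (Type u)) : Type u where
  top : π.left → π'.left
  base : π.right → π'.right
  comm : ∀ e, π'.hom (top e) = base (π.hom e)
  bij : ∀ b : π.right, Function.Bijective
    (fun e : fiber π b => (⟨top e.1, by rw [comm, e.2]⟩ : fiber π' (base b)))

theorem BundHom.ext' {π π' : Arrow (Type u)} {f g : BundHom π π'}
    (h1 : f.top = g.top) (h2 : f.base = g.base) : f = g := by
  cases f; cases g; cases h1; cases h2; rfl

/-- The category of bundles and cartesian squares. -/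
structure Bund : Type (u + 1) where
  π : Arrow (Type u)

instance : Category Bund.{u} where
  Hom A B := BundHom A.π B.π
  id A := ⟨id, id, fun _ => rfl, fun b => ⟨fun e₁ e₂ h => Subtype.ext (congrArg Subtype.val h),
    fun e => ⟨⟨e.1, e.2⟩, Subtype.ext rfl⟩⟩⟩
  comp {A B C} f g :=
    { top := g.top ∘ f.top
      base := g.base ∘ f.base
      comm := fun e => by simp [g.comm, f.comm]
      bij := fun b => by
        have : (fun e : fiber A.π b =>
            (⟨g.top (f.top e.1), by simp [g.comm, f.comm, e.2]⟩ : fiber C.π (g.base (f.base b)))) =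
            (fun e' : fiber B.π (f.base b) => (⟨g.top e'.1, by rw [g.comm, e'.2]⟩ :
              fiber C.π (g.base (f.base b)))) ∘
            (fun e : fiber A.π b => (⟨f.top e.1, by rw [f.comm, e.2]⟩ : fiber B.π (f.base b))) :=
          funext fun e => Subtype.ext rfl
        exact this ▸ Function.Bijective.comp (g.bij (f.base b)) (f.bij b) }
  id_comp f := BundHom.ext' rfl rfl
  comp_id f := BundHom.ext' rfl rfl
  assoc f g h := BundHom.ext' rfl rfl

@[simp] theorem bund_comp_top {A B C : Bund.{u}} (f : A ⟶ B) (g : B ⟶ C) :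
    (f ≫ g).top = g.top ∘ f.top := rfl

@[simp] theorem bund_comp_base {A B C : Bund.{u}} (f : A ⟶ B) (g : B ⟶ C) :
    (f ≫ g).base = g.base ∘ f.base := rfl

/-- The fiberwise equivalence of a bundle morphism. -/
noncomputable def BundHom.fequiv {π π' : Arrow (Type u)} (f : BundHom π π') (b : π.right) :
    fiber π b ≃ fiber π' (f.base b) := Equiv.ofBijective _ (f.bij b)

@[simp] theorem BundHom.fequiv_val {π π' : Arrow (Type u)} (f : BundHom π π') (b : π.right)
    (e : fiber π b) : ((f.fequiv b e : fiber π' (f.base b)) : π'.left) = f.top e.1 := rfl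
theorem sigma_snd_eq {α : Type*} {β : α → Type*} {a : α} {u v : β a}
    (h : (⟨a, u⟩ : Σ a, β a) = ⟨a, v⟩) : u = v := by
  exact eq_of_heq (Sigma.ext_iff.mp h).2

theorem sigmaPolyVal {π' : Arrow (Type u)} {W : Type u}
    {σ τ : Σ b'', fiber π' b'' → W} (h : σ = τ) (v : π'.left)
    (h1 : π'.hom v = σ.1) (h2 : π'.hom v = τ.1) : σ.2 ⟨v, h1⟩ = τ.2 ⟨v, h2⟩ := by
  subst h; rfl

@[simp] theorem BundHom.fequiv_comp {A B C : Bund.{u}} (f : A ⟶ B) (g : B ⟶ C)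
    (b : A.π.right) (e : fiber A.π b) :
    BundHom.fequiv (f ≫ g) b e = g.fequiv (f.base b) (f.fequiv b e) :=
  Subtype.ext rfl

theorem BundHom.fequiv_comp_symm {A B C : Bund.{u}} (f : A ⟶ B) (g : B ⟶ C)
    (b : A.π.right) (e'' : fiber C.π (g.base (f.base b))) :
    (BundHom.fequiv (f ≫ g) b).symm e'' =
      (f.fequiv b).symm ((g.fequiv (f.base b)).symm e'') := by
  rw [Equiv.symm_apply_eq, BundHom.fequiv_comp, Equiv.apply_symm_apply, Equiv.apply_symm_apply]

theorem BundHom.fequiv_id_symm {A : Bund.{u}} (b : A.π.right) (e' : fiber A.π b) :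
    (BundHom.fequiv (𝟙 A) b).symm e' = ⟨e'.1, e'.2⟩ := by
  rw [Equiv.symm_apply_eq]
  exact Subtype.ext rfl

/-- The functor from bundles to polynomial functors. -/
noncomputable def toPoly : Bund.{u} ⥤ PolyCart.{u} where
  obj A := ⟨polyExt A.π, ⟨A.π, ⟨Iso.refl _⟩⟩⟩
  map {A B} f :=
    { t := { app := fun X => TypeCat.ofHom fun s => ⟨f.base s.1, fun e' => s.2 ((f.fequiv s.1).symm e')⟩
             naturality := fun X Y g => rfl }
      cart := by
        intro X Y g
        refine isPullback_of_exun ?_ ?_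
        · rintro ⟨b, k⟩; rfl
        rintro ⟨b', u⟩ ⟨b, v⟩ hxy
        have hb : b' = f.base b := congrArg Sigma.fst hxy
        subst hb
        have h2 : (fun e' => g (u e')) = (fun e' => v ((f.fequiv b).symm e')) :=
          sigma_snd_eq hxy
        refine ⟨⟨b, fun e => u (f.fequiv b e)⟩, ⟨?_, ?_⟩, ?_⟩
        · exact congrArg (Sigma.mk (f.base b))
            (funext fun e' => congrArg u (Equiv.apply_symm_apply _ _))
        · refine congrArg (Sigma.mk b) (funext fun e => ?_)
          have := congrFun h2 (f.fequiv b e)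
          simpa using this
        · rintro ⟨b₀, w⟩ ⟨hw1, hw2⟩
          have hb₀ : b₀ = b := congrArg Sigma.fst hw2
          subst hb₀
          refine congrArg (Sigma.mk b₀) (funext fun e => ?_)
          have := sigma_snd_eq hw1
          have := congrFun this (f.fequiv b₀ e)
          simpa using this }
  map_id A := by
    apply PolyCartHom.ext
    apply NatTrans.ext
    funext X; ext s
    obtain ⟨b, k⟩ := s
    show (⟨b, fun e' => k ((BundHom.fequiv (𝟙 A) b).symm e')⟩ : Σ b, fiber A.π b → X) = ⟨b, k⟩
    refine congrArg (Sigma.mk b) (funext fun e' => ?_)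
    rw [BundHom.fequiv_id_symm]
  map_comp {A B C} f g := by
    apply PolyCartHom.ext
    apply NatTrans.ext
    funext X; ext s
    obtain ⟨b, k⟩ := s
    refine congrArg (Sigma.mk (g.base (f.base b))) (funext fun e'' => ?_)
    rw [BundHom.fequiv_comp_symm]
    rfl
section PolyFull

variable {A B : Bund.{u}} (t : polyExt A.π ⟶ polyExt B.π)

/-- Base map extracted from a transformation of polynomial functors. -/
def pBase (b : A.π.right) : B.π.right := (t.app (fiber A.π b) ⟨b, id⟩).1

/-- Fiber comparison extracted from a transformation of polynomial functors. -/
def pS (b : A.π.right) : fiber B.π (pBase t b) → fiber A.π b :=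
  (t.app (fiber A.π b) ⟨b, id⟩).2

theorem pApp (X : Type u) (b : A.π.right) (k : fiber A.π b → X) :
    t.app X ⟨b, k⟩ = ⟨pBase t b, fun e' => k (pS t b e')⟩ :=
  ConcreteCategory.congr_hom (t.naturality (TypeCat.ofHom k)) ⟨b, id⟩

variable (hcart : ∀ {X Y : Type u} (g : X ⟶ Y),
    IsPullback (t.app X) ((polyExt A.π).map g) ((polyExt B.π).map g) (t.app Y))

include hcart

theorem pKey (b : A.π.right) (X : Type u) (f' : fiber B.π (pBase t b) → X) :
    ∃! k : fiber A.π b → X, (fun e' => k (pS t b e')) = f' := by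
  have sq := hcart (TypeCat.ofHom fun _ : X => PUnit.unit.{u + 1})
  have h := exun_of_isPullback sq ⟨pBase t b, f'⟩ ⟨b, fun _ => PUnit.unit⟩ (by rw [pApp]; exact rfl)
  obtain ⟨⟨b₀, k⟩, ⟨h1, h2⟩, hr⟩ := h
  have hb : b₀ = b := congrArg Sigma.fst h2
  subst hb
  rw [pApp] at h1
  refine ⟨k, sigma_snd_eq h1, ?_⟩
  intro k' hk'
  have := hr ⟨b₀, k'⟩ ⟨by rw [pApp]; exact congrArg _ hk', rfl⟩
  exact sigma_snd_eq this

theorem pS_bijective (b : A.π.right) : Function.Bijective (pS t b) := by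
  constructor
  · obtain ⟨k, hk, -⟩ := pKey t hcart b (fiber B.π (pBase t b)) id
    intro e₁ e₂ h
    have h1 := congrFun hk e₁
    have h2 := congrFun hk e₂
    simp only [id] at h1 h2
    rw [← h1, ← h2, h]
  · intro e
    obtain ⟨k, hk, hu⟩ := pKey t hcart b (ULift.{u} Prop) (fun _ => ⟨True⟩)
    have h1 := hu (fun e => ULift.up (e ∈ Set.range (pS t b)))
      (funext fun e' => congrArg ULift.up (eq_true ⟨e', rfl⟩))
    have h2 := hu (fun _ => ULift.up True) rfl
    have := congrFun (h1.trans h2.symm) e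
    exact of_eq_true (congrArg ULift.down this)

/-- The fiberwise equivalence extracted from a cartesian transformation. -/
noncomputable def pEquiv (b : A.π.right) : fiber B.π (pBase t b) ≃ fiber A.π b :=
  Equiv.ofBijective _ (pS_bijective t hcart b)

@[simp] theorem pEquiv_apply (b : A.π.right) (e' : fiber B.π (pBase t b)) :
    pEquiv t hcart b e' = pS t b e' := rfl

/-- The top map extracted from a cartesian transformation. -/
noncomputable def pTop (e : A.π.left) : B.π.left :=
  ((pEquiv t hcart (A.π.hom e)).symm ⟨e, rfl⟩ : fiber B.π _).1

theorem pTop_val (b : A.π.right) (e : A.π.left) (h : A.π.hom e = b) :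
    pTop t hcart e = ((pEquiv t hcart b).symm ⟨e, h⟩ : fiber B.π _).1 := by
  subst h; rfl

theorem pTop_comm (e : A.π.left) :
    B.π.hom (pTop t hcart e) = pBase t (A.π.hom e) :=
  ((pEquiv t hcart (A.π.hom e)).symm ⟨e, rfl⟩).2

/-- The bundle morphism extracted from a cartesian transformation of polynomial functors. -/
noncomputable def bundHomOfPoly : BundHom A.π B.π where
  top := pTop t hcart
  base := pBase t
  comm := pTop_comm t hcart
  bij b := by
    refine (congrArg Function.Bijective (funext fun e => Subtype.ext ?_)).mpr
      ((pEquiv t hcart b).symm.bijective)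
    exact pTop_val t hcart b e.1 e.2

theorem bundHomOfPoly_fequiv (b : A.π.right) :
    BundHom.fequiv (bundHomOfPoly t hcart) b = (pEquiv t hcart b).symm := by
  apply Equiv.ext
  intro e
  exact Subtype.ext (pTop_val t hcart b e.1 e.2)

end PolyFull

/-- A natural isomorphism of polynomial functors gives an isomorphism in `PolyCart`. -/
def polyCartIsoOfIso {P Q : PolyCart.{u}} (j : P.F ≅ Q.F) : P ≅ Q where
  hom := ⟨j.hom, fun g => IsPullback.of_horiz_isIso ⟨(j.hom.naturality g).symm⟩⟩
  inv := ⟨j.inv, fun g => IsPullback.of_horiz_isIso ⟨(j.inv.naturality g).symm⟩⟩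
  hom_inv_id := PolyCartHom.ext j.hom_inv_id
  inv_hom_id := PolyCartHom.ext j.inv_hom_id

instance : toPoly.{u}.Faithful where
  map_injective {A B} f f' h := by
    have ht : ∀ (X : Type u) (s : (polyExt A.π).obj X),
        (toPoly.map f).t.app X s = (toPoly.map f').t.app X s := fun X s => by rw [h]
    have hbase : f.base = f'.base := funext fun b =>
      congrArg Sigma.fst (ht PUnit.{u + 1} ⟨b, fun _ => PUnit.unit⟩)
    refine BundHom.ext' ?_ hbase
    funext e
    have hσ := ht (fiber A.π (A.π.hom e)) ⟨A.π.hom e, id⟩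
    have h1 : B.π.hom (f.top e) = f.base (A.π.hom e) := f.comm e
    have h2 : B.π.hom (f.top e) = f'.base (A.π.hom e) := by rw [← hbase]; exact h1
    have hval : (f.fequiv (A.π.hom e)).symm ⟨f.top e, h1⟩ =
        (f'.fequiv (A.π.hom e)).symm ⟨f.top e, h2⟩ := sigmaPolyVal hσ (f.top e) h1 h2
    have hL : (⟨f.top e, h1⟩ : fiber B.π (f.base (A.π.hom e))) =
        f.fequiv (A.π.hom e) ⟨e, rfl⟩ := Subtype.ext rfl
    have hLs : (f.fequiv (A.π.hom e)).symm ⟨f.top e, h1⟩ = ⟨e, rfl⟩ := by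
      rw [hL, Equiv.symm_apply_apply]
    rw [hLs] at hval
    have : (⟨f.top e, h2⟩ : fiber B.π (f'.base (A.π.hom e))) =
        f'.fequiv (A.π.hom e) ⟨e, rfl⟩ := (Equiv.symm_apply_eq _).mp hval.symm
    exact congrArg Subtype.val this

instance : toPoly.{u}.Full where
  map_surjective {A B} t := by
    refine ⟨bundHomOfPoly t.t (fun {X Y} g => t.cart g), ?_⟩
    apply PolyCartHom.ext
    apply NatTrans.ext
    funext X; ext s
    obtain ⟨b, k⟩ := s
    show (⟨pBase t.t b, fun e' =>
        k ((BundHom.fequiv (bundHomOfPoly t.t fun {X Y} g => t.cart g) b).symm e')⟩ :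
        Σ b', fiber B.π b' → X) = t.t.app X ⟨b, k⟩
    erw [pApp, bundHomOfPoly_fequiv]
    refine congrArg (Sigma.mk (pBase t.t b)) (funext fun e' => congrArg k ?_)
    erw [Equiv.symm_symm]; exact rfl

instance : toPoly.{u}.EssSurj where
  mem_essImage P := by
    obtain ⟨π, ⟨i⟩⟩ := P.ispoly
    exact ⟨⟨π⟩, ⟨polyCartIsoOfIso i.symm⟩⟩

instance : toPoly.{u}.IsEquivalence := {}
/-- The Dirichlet functor `X ↦ Σ (b : B), (X → π⁻¹ b)` of a bundle `π : E → B`. -/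
def dirExt (π : Arrow (Type u)) : (Type u)ᵒᵖ ⥤ Type u where
  obj X := Σ b : π.right, X.unop → fiber π b
  map g := TypeCat.ofHom fun s => ⟨s.1, fun x => s.2 (g.unop x)⟩

theorem isDirichlet_dirExt (π : Arrow (Type u)) : IsDirichlet (dirExt π) := by
  intro J _ _
  refine ⟨⟨fun {K} => ⟨fun {c} hc => (Types.isLimit_iff _).mpr ?_⟩⟩⟩
  intro s hs
  have j₀ : J := Classical.arbitrary J
  set b : π.right := (s j₀).1 with hbdef
  have hbconst : ∀ j, (s j).1 = b := by
    intro j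
    exact constant_of_preserves_morphisms (fun j => (s j).1)
      (fun j₁ j₂ f => congrArg Sigma.fst (hs f)) j j₀
  let ψ : ∀ j, (K.obj j).unop → fiber π b := fun j x =>
    ⟨((s j).2 x).1, by rw [((s j).2 x).2]; exact hbconst j⟩
  have hψ : ∀ {j j'} (f : j ⟶ j') (y : (K.obj j').unop),
      (ψ j' y : π.left) = ((ψ j ((K.map f).unop y) : fiber π b) : π.left) :=
    fun {j j'} f y => (sigmaFibVal (hs f) y).symm
  let cn : Cone K :=
    { pt := op (fiber π b)
      π := { app := fun j => (TypeCat.ofHom (ψ j)).op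
             naturality := fun j j' f => by
               apply Quiver.Hom.unop_inj
               ext y
               exact Subtype.ext (hψ f y) } }
  refine ⟨⟨b, (hc.lift cn).unop⟩, fun j => ?_, ?_⟩
  · refine sigmaFibEq (hbconst j).symm fun y => ?_
    have hfac := congrArg Quiver.Hom.unop (hc.fac cn j)
    have h2 : (((dirExt π).mapCone c).π.app j ⟨b, (hc.lift cn).unop⟩).snd y
        = (hc.lift cn ≫ c.π.app j).unop y := rfl
    rw [h2, hfac]
    exact rfl
  · rintro ⟨b', u'⟩ hx
    have hb' : b' = b := (congrArg Sigma.fst (hx j₀)).trans (hbconst j₀)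
    subst hb'
    refine congrArg (Sigma.mk b) ?_
    have huniq : (TypeCat.ofHom (u' : c.pt.unop → fiber π b)).op = hc.lift cn := by
      apply hc.uniq cn
      intro j
      apply Quiver.Hom.unop_inj
      refine ConcreteCategory.hom_ext _ _ fun y => ?_
      have h3 : ((TypeCat.ofHom u').op ≫ c.π.app j).unop y
          = (((dirExt π).mapCone c).π.app j ⟨b, u'⟩).snd y := rfl
      rw [h3]
      exact Subtype.ext (sigmaFibVal (hx j) y)
    exact (congrArg (fun m : op (fiber π b) ⟶ c.pt => (m.unop : c.pt.unop → fiber π b)) huniq)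
/-- The functor from bundles to Dirichlet functors. -/
noncomputable def toDir : Bund.{u} ⥤ DirCart.{u} where
  obj A := ⟨dirExt A.π, isDirichlet_dirExt A.π⟩
  map {A B} f :=
    { t := { app := fun X => TypeCat.ofHom fun s => ⟨f.base s.1, fun x => f.fequiv s.1 (s.2 x)⟩
             naturality := fun X Y g => rfl }
      cart := by
        intro X Y g
        refine isPullback_of_exun ?_ ?_
        · rintro ⟨b, k⟩; rfl
        rintro ⟨b', u⟩ ⟨b, v⟩ hxy
        have hb : b' = f.base b := congrArg Sigma.fst hxy
        subst hb
        have h2 : (fun yy => u (g.unop yy)) = (fun yy => f.fequiv b (v yy)) :=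
          sigma_snd_eq hxy
        refine ⟨⟨b, fun x => (f.fequiv b).symm (u x)⟩, ⟨?_, ?_⟩, ?_⟩
        · exact congrArg (Sigma.mk (f.base b))
            (funext fun x => Equiv.apply_symm_apply _ _)
        · refine congrArg (Sigma.mk b) (funext fun yy => ?_)
          show (BundHom.fequiv f b).symm (u (g.unop yy)) = v yy
          rw [congrFun h2 yy, Equiv.symm_apply_apply]
        · rintro ⟨b₀, w⟩ ⟨hw1, hw2⟩
          have hb₀ : b₀ = b := congrArg Sigma.fst hw2
          subst hb₀
          refine congrArg (Sigma.mk b₀) (funext fun x => ?_)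
          have := congrFun (sigma_snd_eq hw1) x
          show w x = (BundHom.fequiv f b₀).symm (u x)
          rw [← this, Equiv.symm_apply_apply] }
  map_id A := by
    apply DirCartHom.ext
    apply NatTrans.ext
    funext X; ext s
    obtain ⟨b, k⟩ := s
    exact congrArg (Sigma.mk b) (funext fun x => Subtype.ext rfl)
  map_comp {A B C} f g := by
    apply DirCartHom.ext
    apply NatTrans.ext
    funext X; ext s
    obtain ⟨b, k⟩ := s
    exact congrArg (Sigma.mk (g.base (f.base b))) (funext fun x => Subtype.ext rfl)

section DirFull

variable {A B : Bund.{u}} (t : dirExt A.π ⟶ dirExt B.π)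

/-- Base map extracted from a transformation of Dirichlet functors. -/
def dBase (b : A.π.right) : B.π.right := (t.app (op (fiber A.π b)) ⟨b, id⟩).1

/-- Fiber comparison extracted from a transformation of Dirichlet functors. -/
def dS (b : A.π.right) : fiber A.π b → fiber B.π (dBase t b) :=
  (t.app (op (fiber A.π b)) ⟨b, id⟩).2

theorem dApp (X : (Type u)ᵒᵖ) (b : A.π.right) (k : X.unop → fiber A.π b) :
    t.app X ⟨b, k⟩ = ⟨dBase t b, fun x => dS t b (k x)⟩ :=
  ConcreteCategory.congr_hom (t.naturality (TypeCat.ofHom k).op) ⟨b, id⟩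

variable (hcart : ∀ {X Y : (Type u)ᵒᵖ} (g : X ⟶ Y),
    IsPullback (t.app X) ((dirExt A.π).map g) ((dirExt B.π).map g) (t.app Y))

include hcart

theorem dKey (b : A.π.right) (X : (Type u)ᵒᵖ) (f' : X.unop → fiber B.π (dBase t b)) :
    ∃! k : X.unop → fiber A.π b, (fun x => dS t b (k x)) = f' := by
  have sq := hcart (TypeCat.ofHom (fun e : PEmpty.{u + 1} => (e.elim : X.unop))).op
  have h := exun_of_isPullback sq ⟨dBase t b, f'⟩ ⟨b, fun e => e.elim⟩
    (by rw [dApp]; exact congrArg (Sigma.mk (dBase t b)) (funext fun e => e.elim))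
  obtain ⟨⟨b₀, k⟩, ⟨h1, h2⟩, hr⟩ := h
  have hb : b₀ = b := congrArg Sigma.fst h2
  subst hb
  rw [dApp] at h1
  refine ⟨k, sigma_snd_eq h1, ?_⟩
  intro k' hk'
  have := hr ⟨b₀, k'⟩ ⟨by rw [dApp]; exact congrArg _ hk',
    congrArg (Sigma.mk b₀) (funext fun e => e.elim)⟩
  exact sigma_snd_eq this

theorem dS_bijective (b : A.π.right) : Function.Bijective (dS t b) := by
  constructor
  · intro e₁ e₂ h
    obtain ⟨k, hk, hu⟩ := dKey t hcart b (op PUnit.{u + 1}) (fun _ => dS t b e₁)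
    have h1 := hu (fun _ => e₁) rfl
    have h2 := hu (fun _ => e₂) (funext fun _ => h.symm)
    exact congrFun (h1.trans h2.symm) PUnit.unit
  · intro e'
    obtain ⟨k, hk, -⟩ := dKey t hcart b (op (fiber B.π (dBase t b))) id
    exact ⟨k e', congrFun hk e'⟩

/-- The fiberwise equivalence extracted from a cartesian transformation. -/
noncomputable def dEquiv (b : A.π.right) : fiber A.π b ≃ fiber B.π (dBase t b) :=
  Equiv.ofBijective _ (dS_bijective t hcart b)

/-- The top map extracted from a cartesian transformation of Dirichlet functors. -/
noncomputable def dTop (e : A.π.left) : B.π.left :=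
  ((dEquiv t hcart (A.π.hom e)) ⟨e, rfl⟩ : fiber B.π _).1

theorem dTop_val (b : A.π.right) (e : A.π.left) (h : A.π.hom e = b) :
    dTop t hcart e = ((dEquiv t hcart b) ⟨e, h⟩ : fiber B.π _).1 := by
  subst h; rfl

theorem dTop_comm (e : A.π.left) :
    B.π.hom (dTop t hcart e) = dBase t (A.π.hom e) :=
  ((dEquiv t hcart (A.π.hom e)) ⟨e, rfl⟩).2

/-- The bundle morphism extracted from a cartesian transformation of Dirichlet functors. -/
noncomputable def bundHomOfDir : BundHom A.π B.π where
  top := dTop t hcart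
  base := dBase t
  comm := dTop_comm t hcart
  bij b := by
    refine (congrArg Function.Bijective (funext fun e => Subtype.ext ?_)).mpr
      ((dEquiv t hcart b).bijective)
    exact dTop_val t hcart b e.1 e.2

theorem bundHomOfDir_fequiv (b : A.π.right) :
    BundHom.fequiv (bundHomOfDir t hcart) b = dEquiv t hcart b := by
  apply Equiv.ext
  intro e
  exact Subtype.ext (dTop_val t hcart b e.1 e.2)

end DirFull

/-- A natural isomorphism of Dirichlet functors gives an isomorphism in `DirCart`. -/
def dirCartIsoOfIso {P Q : DirCart.{u}} (j : P.F ≅ Q.F) : P ≅ Q where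
  hom := ⟨j.hom, fun g => IsPullback.of_horiz_isIso ⟨(j.hom.naturality g).symm⟩⟩
  inv := ⟨j.inv, fun g => IsPullback.of_horiz_isIso ⟨(j.inv.naturality g).symm⟩⟩
  hom_inv_id := DirCartHom.ext j.hom_inv_id
  inv_hom_id := DirCartHom.ext j.inv_hom_id

instance : toDir.{u}.Faithful where
  map_injective {A B} f f' h := by
    have ht : ∀ (X : (Type u)ᵒᵖ) (s : (dirExt A.π).obj X),
        (toDir.map f).t.app X s = (toDir.map f').t.app X s := fun X s => by rw [h]
    have hbase : f.base = f'.base := funext fun b =>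
      congrArg Sigma.fst (ht (op PEmpty.{u + 1}) ⟨b, fun e => e.elim⟩)
    refine BundHom.ext' ?_ hbase
    funext e
    exact sigmaFibVal (ht (op (fiber A.π (A.π.hom e))) ⟨A.π.hom e, id⟩) ⟨e, rfl⟩

instance : toDir.{u}.Full where
  map_surjective {A B} t := by
    refine ⟨bundHomOfDir t.t (fun {X Y} g => t.cart g), ?_⟩
    apply DirCartHom.ext
    apply NatTrans.ext
    funext X; ext s
    obtain ⟨b, k⟩ := s
    show (⟨dBase t.t b, fun x =>
        BundHom.fequiv (bundHomOfDir t.t fun {X Y} g => t.cart g) b (k x)⟩ :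
        Σ b', X.unop → fiber B.π b') = t.t.app X ⟨b, k⟩
    erw [dApp, bundHomOfDir_fequiv]
    exact rfl
section DirEssSurj

/-- The canonical map to the empty object. -/
def eD (X : (Type u)ᵒᵖ) : X ⟶ op PEmpty.{u + 1} :=
  (TypeCat.ofHom (fun e : PEmpty.{u + 1} => (e.elim : X.unop))).op

/-- The point inclusion. -/
def uD (X : (Type u)ᵒᵖ) (x : X.unop) : X ⟶ op PUnit.{u + 1} :=
  (TypeCat.ofHom (fun _ : PUnit.{u + 1} => x)).op

theorem comp_eD {X Y : (Type u)ᵒᵖ} (g : X ⟶ Y) : g ≫ eD Y = eD X :=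
  Quiver.Hom.unop_inj (ConcreteCategory.hom_ext _ _ fun e => e.elim)

theorem comp_uD {X Y : (Type u)ᵒᵖ} (g : X ⟶ Y) (y : Y.unop) :
    g ≫ uD Y y = uD X (g.unop y) :=
  Quiver.Hom.unop_inj rfl

theorem eD_empty : eD (op PEmpty.{u + 1}) = 𝟙 _ :=
  Quiver.Hom.unop_inj (ConcreteCategory.hom_ext _ _ fun e => e.elim)

theorem uD_unit : uD (op PUnit.{u + 1}) PUnit.unit = 𝟙 _ :=
  Quiver.Hom.unop_inj rfl

variable (D : DirCart.{u})

/-- The canonical bundle of a Dirichlet functor. -/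
def bundleOf : Arrow (Type u) :=
  Arrow.mk (D.F.map (eD (op PUnit.{u + 1})) : D.F.obj (op PUnit.{u + 1}) ⟶ D.F.obj (op PEmpty.{u + 1}))

theorem phiD_aux {X : (Type u)ᵒᵖ} (d : D.F.obj X) (x : X.unop) :
    (bundleOf D).hom (D.F.map (uD X x) d) = D.F.map (eD X) d := by
  have h1 : (bundleOf D).hom (D.F.map (uD X x) d) = D.F.map (uD X x ≫ eD (op PUnit.{u + 1})) d :=
    (ConcreteCategory.congr_hom (D.F.map_comp (uD X x) (eD _)) d).symm
  rw [h1, comp_eD]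

/-- The comparison map from a Dirichlet functor to the Dirichlet extension of its
canonical bundle. -/
def phiD : D.F ⟶ dirExt (bundleOf D) where
  app X := TypeCat.ofHom fun d => ⟨D.F.map (eD X) d, fun x => ⟨D.F.map (uD X x) d, phiD_aux D d x⟩⟩
  naturality X Y g := by
    refine ConcreteCategory.hom_ext _ _ fun d => ?_
    refine sigmaFibEq ?_ ?_
    · exact (ConcreteCategory.congr_hom (D.F.map_comp g (eD Y)) d).symm.trans
        (congrArg (fun h => D.F.map h d) (comp_eD g))
    · intro y
      exact (ConcreteCategory.congr_hom (D.F.map_comp g (uD Y y)) d).symm.trans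
        (congrArg (fun h => D.F.map h d) (comp_uD g y))

theorem phiD_app_fst {X : (Type u)ᵒᵖ} (d : D.F.obj X) :
    ((phiD D).app X d).1 = D.F.map (eD X) d := rfl

theorem phiD_empty_bijective : Function.Bijective ((phiD D).app (op PEmpty.{u + 1})) := by
  have hfst : ∀ d, D.F.map (eD (op PEmpty.{u + 1})) d = d := by
    intro d
    rw [eD_empty]
    exact ConcreteCategory.congr_hom (D.F.map_id _) d
  constructor
  · intro d d' h
    have := congrArg Sigma.fst h
    rwa [phiD_app_fst, phiD_app_fst, hfst, hfst] at this
  · rintro ⟨b, v⟩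
    refine ⟨b, sigmaFibEq ?_ ?_⟩
    · exact hfst b
    · intro x
      exact x.elim

theorem phiD_unit_bijective : Function.Bijective ((phiD D).app (op PUnit.{u + 1})) := by
  have hsnd : ∀ d, D.F.map (uD (op PUnit.{u + 1}) PUnit.unit) d = d := by
    intro d
    rw [uD_unit]
    exact ConcreteCategory.congr_hom (D.F.map_id _) d
  constructor
  · intro d d' h
    have := sigmaFibVal h PUnit.unit
    change D.F.map (uD (op PUnit.{u + 1}) PUnit.unit) d = D.F.map (uD (op PUnit.{u + 1}) PUnit.unit) d' at this
    rwa [hsnd, hsnd] at this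
  · rintro ⟨b, v⟩
    refine ⟨(v PUnit.unit).1, sigmaFibEq ?_ ?_⟩
    · exact (v PUnit.unit).2
    · intro x
      match x with
      | PUnit.unit => exact hsnd _
end DirEssSurj
section WidePushout

variable (C : Type u)

/-- The wide span whose wide pushout is `C`. -/
def wps : WidePushoutShape C ⥤ Type u :=
  WidePushoutShape.wideSpan PEmpty.{u + 1} (fun _ => PUnit.{u + 1}) (fun _ => TypeCat.ofHom fun e => e.elim)

/-- The cocone exhibiting `C` as the wide pushout of `C`-many points. -/
def wcc : Cocone (wps C) where
  pt := C
  ι := { app := fun j => match j with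
           | none => TypeCat.ofHom fun e => e.elim
           | some x => TypeCat.ofHom fun _ => x
         naturality := fun j j' f => by
           match f with
           | WidePushoutShape.Hom.id _ => rfl
           | WidePushoutShape.Hom.init _ => exact ConcreteCategory.hom_ext _ _ fun e => e.elim }

/-- The cocone `wcc C` is a colimit. -/
def wcolim : IsColimit (wcc C) where
  desc s := TypeCat.ofHom fun x => s.ι.app (some x) PUnit.unit
  fac s j := by
    match j with
    | none => exact ConcreteCategory.hom_ext _ _ fun e => e.elim
    | some x => rfl
  uniq s m w := by
    ext x
    exact ConcreteCategory.congr_hom (w (some x)) PUnit.unit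

end WidePushout

section DirEssSurj2

variable (D : DirCart.{u})

theorem phiD_app_isIso (X : (Type u)ᵒᵖ) : IsIso ((phiD D).app X) := by
  haveI : IsConnected ((WidePushoutShape X.unop)ᵒᵖ) := isConnected_op
  haveI := (D.isdir ((WidePushoutShape X.unop)ᵒᵖ)).some
  haveI := (isDirichlet_dirExt (bundleOf D) ((WidePushoutShape X.unop)ᵒᵖ)).some
  have lim1 : IsLimit (D.F.mapCone ((wcc X.unop).op)) :=
    isLimitOfPreserves D.F ((wcolim X.unop).op)
  have lim2 : IsLimit ((dirExt (bundleOf D)).mapCone ((wcc X.unop).op)) :=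
    isLimitOfPreserves (dirExt (bundleOf D)) ((wcolim X.unop).op)
  haveI happ : ∀ (j : (WidePushoutShape X.unop)ᵒᵖ),
      IsIso ((Functor.whiskerLeft (wps X.unop).op (phiD D)).app j) := by
    intro j
    obtain ⟨j'⟩ := j
    match j' with
    | none =>
      show IsIso ((phiD D).app (op PEmpty.{u + 1}))
      exact (isIso_iff_bijective _).mpr (phiD_empty_bijective D)
    | some x =>
      show IsIso ((phiD D).app (op PUnit.{u + 1}))
      exact (isIso_iff_bijective _).mpr (phiD_unit_bijective D)
  haveI : IsIso (Functor.whiskerLeft (wps X.unop).op (phiD D)) :=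
    NatIso.isIso_of_isIso_app _
  have claim : (phiD D).app X =
      (IsLimit.conePointsIsoOfNatIso lim1 lim2
        (asIso (Functor.whiskerLeft (wps X.unop).op (phiD D)))).hom := by
    apply lim2.hom_ext
    intro j
    erw [IsLimit.conePointsIsoOfNatIso_hom_comp]
    exact ((phiD D).naturality (((wcc X.unop).op).π.app j)).symm
  rw [claim]
  exact Iso.isIso_hom _

instance : toDir.{u}.EssSurj where
  mem_essImage D := by
    haveI : ∀ X, IsIso ((phiD D).app X) := phiD_app_isIso D
    haveI : IsIso (phiD D) := NatIso.isIso_of_isIso_app _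
    exact ⟨⟨bundleOf D⟩, ⟨dirCartIsoOfIso (asIso (phiD D)).symm⟩⟩

instance : toDir.{u}.IsEquivalence := {}

end DirEssSurj2
/-- Extract the underlying natural isomorphism from an isomorphism in `PolyCart`. -/
def polyIsoOfPolyCartIso {P Q : PolyCart.{u}} (c : P ≅ Q) : P.F ≅ Q.F where
  hom := c.hom.t
  inv := c.inv.t
  hom_inv_id := congrArg PolyCartHom.t c.hom_inv_id
  inv_hom_id := congrArg PolyCartHom.t c.inv_hom_id

/-- Extract the underlying natural isomorphism from an isomorphism in `DirCart`. -/
def dirIsoOfDirCartIso {P Q : DirCart.{u}} (c : P ≅ Q) : P.F ≅ Q.F where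
  hom := c.hom.t
  inv := c.inv.t
  hom_inv_id := congrArg DirCartHom.t c.hom_inv_id
  inv_hom_id := congrArg DirCartHom.t c.inv_hom_id

/-- The bundle `N → 1`. -/
def bundleN (N : Type u) : Arrow (Type u) := Arrow.mk (TypeCat.ofHom fun _ : N => PUnit.unit.{u + 1})

/-- The representable polynomial functor is the extension of `N → 1`. -/
def coyIso (N : Type u) : coyoneda.obj (op N) ≅ polyExt (bundleN N) :=
  NatIso.ofComponents (fun X =>
    { hom := TypeCat.ofHom fun (k : N ⟶ X) => ⟨PUnit.unit, fun e => k e.1⟩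
      inv := TypeCat.ofHom fun s => TypeCat.ofHom fun n => s.2 ⟨n, Subsingleton.elim (α := PUnit.{u + 1}) _ _⟩
      hom_inv_id := by ext k; rfl
      inv_hom_id := by
        refine ConcreteCategory.hom_ext _ _ fun s => ?_
        obtain ⟨b, v⟩ := s
        obtain ⟨⟩ := b
        exact congrArg (Sigma.mk PUnit.unit)
          (funext fun e => congrArg v (Subtype.ext rfl)) })
    (fun g => rfl)

/-- The representable Dirichlet functor is the extension of `N → 1`. -/
def yIso (N : Type u) : dirExt (bundleN N) ≅ yoneda.obj N :=
  NatIso.ofComponents (fun X =>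
    { hom := TypeCat.ofHom fun s => TypeCat.ofHom fun x => (s.2 x).1
      inv := TypeCat.ofHom fun (k : X.unop ⟶ N) => ⟨PUnit.unit, fun x => ⟨k x, Subsingleton.elim (α := PUnit.{u + 1}) _ _⟩⟩
      hom_inv_id := by
        refine ConcreteCategory.hom_ext _ _ fun s => ?_
        obtain ⟨b, v⟩ := s
        obtain ⟨⟩ := b
        exact congrArg (Sigma.mk PUnit.unit)
          (funext fun x => Subtype.ext rfl)
      inv_hom_id := by ext k; rfl })
    (fun g => rfl)

/-- The category of polynomial functors with cartesian natural
transformations is equivalent to the category of Dirichlet functors with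
cartesian natural transformations; under this equivalence the representable
polynomial `X ↦ X^N` corresponds to the representable Dirichlet functor
`X ↦ N^X`. -/
theorem polyCart_equiv_dirCart :
    ∃ e : PolyCart.{u} ≌ DirCart.{u},
      ∀ (P : PolyCart.{u}) (N : Type u),
        Nonempty (P.F ≅ coyoneda.obj (op N)) →
          Nonempty ((e.functor.obj P).F ≅ yoneda.obj N) := by
  refine ⟨toPoly.asEquivalence.symm.trans toDir.asEquivalence, ?_⟩
  intro P N hN
  obtain ⟨i⟩ := hN
  -- the bundle underlying `P` after inverting the equivalence
  let Z : Bund.{u} := toPoly.asEquivalence.inverse.obj P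
  -- `toPoly.obj Z ≅ P` in `PolyCart`
  let counit : toPoly.obj Z ≅ P := toPoly.asEquivalence.counitIso.app P
  -- transfer the hypothesis iso to an iso in `PolyCart` with the bundle `N → 1`
  let pcIso : toPoly.obj Z ≅ toPoly.obj ⟨bundleN N⟩ :=
    counit ≪≫ polyCartIsoOfIso (i ≪≫ coyIso N)
  let zIso : Z ≅ ⟨bundleN N⟩ := toPoly.preimageIso pcIso
  exact ⟨dirIsoOfDirCartIso (toDir.mapIso zIso) ≪≫ yIso N⟩
end
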